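/- Let φ : [0,1] → [0,∞) be nondecreasing with F(h) := ∫₀ʰ φ(t) dt, and suppose θ ∈ (0,1) satisfies F(h) ≥ θ·h·φ(h) for all h ∈ (0,1]. Then for all h ∈ (0,1], φ(h) ≥ h^{1/θ − 1}·F(1). -/

import Mathlib

open MeasureTheory intervalIntegral

theorem stmt1 (φ : ℝ → ℝ) (hmono : MonotoneOn φ (Set.Icc 0 1))
    (hnonneg : ∀ t ∈ Set.Icc (0:ℝ) 1, 0 ≤ φ t)
    (hint : IntervalIntegrable φ volume 0 1)
    (θ : ℝ) (hθ0 : 0 < θ) (hθ1 : θ < 1)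
    (hH : ∀ h ∈ Set.Ioc (0:ℝ) 1, θ * h * φ h ≤ ∫ t in (0:ℝ)..h, φ t) :
    ∀ h ∈ Set.Ioc (0:ℝ) 1,
      h ^ (1/θ - 1) * (∫ t in (0:ℝ)..1, φ t) ≤ φ h := by
  intro h hh
  obtain ⟨h0, h1⟩ := hh
  set F : ℝ → ℝ := fun x => ∫ t in (0:ℝ)..x, φ t with hF
  -- integrability on subintervals of [0,1]
  have hint' : ∀ x ∈ Set.Icc (0:ℝ) 1, ∀ y ∈ Set.Icc (0:ℝ) 1,
      IntervalIntegrable φ volume x y := by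
    intro x hx y hy
    apply hint.mono_set
    rw [Set.uIcc_subset_uIcc_iff_mem]
    constructor
    · simpa [Set.uIcc_of_le (zero_le_one' ℝ)] using hx
    · simpa [Set.uIcc_of_le (zero_le_one' ℝ)] using hy
  -- F is continuous on [0,1]
  have hFcont : ContinuousOn F (Set.Icc 0 1) := by
    have := intervalIntegral.continuousOn_primitive_interval'
      (μ := volume) (f := φ) (b₁ := 0) (b₂ := 1) hint
      Set.left_mem_uIcc
    simpa [Set.uIcc_of_le (zero_le_one' ℝ)] using this
  -- F x ≤ x * φ x for x ∈ (0,1]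
  have hFle : ∀ x ∈ Set.Ioc (0:ℝ) 1, F x ≤ x * φ x := by
    intro x hx
    have hφint : IntervalIntegrable φ volume 0 x :=
      hint' 0 (by norm_num) x ⟨hx.1.le, hx.2⟩
    have : (∫ t in (0:ℝ)..x, φ t) ≤ ∫ t in (0:ℝ)..x, φ x := by
      apply intervalIntegral.integral_mono_on hx.1.le hφint (by simp)
      intro t ht
      exact hmono ⟨ht.1, ht.2.trans hx.2⟩ ⟨hx.1.le, hx.2⟩ ht.2
    simpa [mul_comm] using this
  -- The difference F z - F x is the integral from x to z
  have hFdiff : ∀ x ∈ Set.Icc (0:ℝ) 1, ∀ z ∈ Set.Icc (0:ℝ) 1,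
      F z - F x = ∫ t in x..z, φ t := by
    intro x hx z hz
    have := intervalIntegral.integral_add_adjacent_intervals
      (hint' 0 (by norm_num) x hx) (hint' x hx z hz)
    simp only [hF]
    linarith [this]
  -- φ z ≤ F z / (θ * z) for z ∈ (0,1]
  have hφle : ∀ z ∈ Set.Ioc (0:ℝ) 1, φ z ≤ F z / (θ * z) := by
    intro z hz
    rw [le_div_iff₀ (mul_pos hθ0 hz.1)]
    calc φ z * (θ * z) = θ * z * φ z := by ring
      _ ≤ F z := hH z hz
  -- the weight function
  set p : ℝ → ℝ := fun x => x ^ (-(1/θ)) with hp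
  set G : ℝ → ℝ := fun x => F x * p x with hG
  -- Key step: G 1 ≤ G h via the fencing lemma
  have hGle : G 1 ≤ G h := by
    have hGcont : ContinuousOn G (Set.Icc h 1) := by
      apply ContinuousOn.mul
      · exact hFcont.mono (Set.Icc_subset_Icc h0.le le_rfl)
      · intro x hx
        exact (Real.continuousAt_rpow_const x _
          (Or.inl (h0.trans_le hx.1).ne')).continuousWithinAt
    have key : ∀ ⦃x⦄, x ∈ Set.Icc h 1 → G x ≤ G h := by
      apply image_le_of_liminf_slope_right_le_deriv_boundary (B := fun _ => G h)
        (B' := fun _ => 0) hGcont le_rfl continuousOn_const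
        (fun x _ => hasDerivWithinAt_const x _ _)
      intro x hx r hr
      have hx0 : 0 < x := h0.trans_le hx.1
      have hx1 : x < 1 := hx.2
      have hIoc : Set.Ioc x 1 ∈ nhdsWithin x (Set.Ioi x) :=
        Ioc_mem_nhdsGT_of_mem ⟨le_rfl, hx1⟩
      -- comparison function g with limit 0 from the right at x
      set d : ℝ := (-(1/θ)) * x ^ ((-(1/θ)) - 1) with hd
      set g : ℝ → ℝ := fun z => F z * slope p x z + p x * (F z / (θ * z)) with hg
      have hFt : Filter.Tendsto F (nhdsWithin x (Set.Ioi x)) (nhds (F x)) := by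
        have hc : ContinuousWithinAt F (Set.Icc 0 1) x :=
          hFcont x ⟨hx0.le, hx1.le⟩
        refine hc.tendsto.mono_left (nhdsWithin_le_of_mem ?_)
        exact Filter.mem_of_superset hIoc
          (fun z hz => ⟨hx0.le.trans hz.1.le, hz.2⟩)
      have hslopet : Filter.Tendsto (slope p x) (nhdsWithin x (Set.Ioi x)) (nhds d) := by
        have hder : HasDerivAt p d x := by
          simpa [hp, hd] using Real.hasDerivAt_rpow_const (p := -(1/θ)) (Or.inl hx0.ne')
        exact (hasDerivAt_iff_tendsto_slope.mp hder).mono_left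
          (nhdsWithin_mono x (fun z hz => ne_of_gt hz))
      have hidt : Filter.Tendsto (fun z : ℝ => z) (nhdsWithin x (Set.Ioi x)) (nhds x) :=
        Filter.tendsto_id.mono_left nhdsWithin_le_nhds
      have hgt : Filter.Tendsto g (nhdsWithin x (Set.Ioi x))
          (nhds (F x * d + p x * (F x / (θ * x)))) := by
        apply Filter.Tendsto.add
        · exact hFt.mul hslopet
        · exact Filter.Tendsto.const_mul _ (hFt.div
            ((tendsto_const_nhds.mul hidt)) (by positivity))
      have hlim0 : F x * d + p x * (F x / (θ * x)) = 0 := by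
        have hxne : x ≠ 0 := hx0.ne'
        have h1 : x ^ ((-(1/θ)) - 1) = x ^ (-(1/θ)) / x := by
          rw [Real.rpow_sub hx0, Real.rpow_one]
        simp only [hd, hp, h1]
        field_simp
        ring
      rw [hlim0] at hgt
      -- eventually g z < r
      have hev1 : ∀ᶠ z in nhdsWithin x (Set.Ioi x), g z < r :=
        hgt.eventually_lt_const hr
      -- eventually slope G x z ≤ g z
      have hev2 : ∀ᶠ z in nhdsWithin x (Set.Ioi x), slope G x z ≤ g z := by
        filter_upwards [hIoc] with z hz
        have hzx : x < z := hz.1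
        have hz0 : 0 < z := hx0.trans hzx
        have hzmem : z ∈ Set.Icc (0:ℝ) 1 := ⟨hz0.le, hz.2⟩
        have hxmem : x ∈ Set.Icc (0:ℝ) 1 := ⟨hx0.le, hx1.le⟩
        -- slope of G decomposes
        have hdecomp : slope G x z = F z * slope p x z + p x * slope F x z := by
          simp only [slope_def_field, hG]
          field_simp
          ring
        -- slope of F is bounded by φ z, which is bounded by F z/(θ z)
        have hslopeF : slope F x z ≤ F z / (θ * z) := by
          have hFz : F z - F x ≤ (z - x) * φ z := by
            rw [hFdiff x hxmem z hzmem]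
            have : (∫ t in x..z, φ t) ≤ ∫ t in x..z, φ z := by
              apply intervalIntegral.integral_mono_on hzx.le
                (hint' x hxmem z hzmem) (by simp)
              intro t ht
              exact hmono ⟨hx0.le.trans ht.1, ht.2.trans hz.2⟩ hzmem ht.2
            simpa [mul_comm] using this
          have h1 : slope F x z ≤ φ z := by
            rw [slope_def_field, div_le_iff₀ (by linarith)]
            linarith [hFz]
          exact h1.trans (hφle z ⟨hz0, hz.2⟩)
        rw [hdecomp]
        have hpx : 0 ≤ p x := Real.rpow_nonneg hx0.le _
        exact add_le_add_right (mul_le_mul_of_nonneg_left hslopeF hpx) _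
      have hev : ∀ᶠ z in nhdsWithin x (Set.Ioi x), slope G x z < r := by
        filter_upwards [hev1, hev2] with z h1 h2
        exact lt_of_le_of_lt h2 h1
      exact hev.frequently
    exact key (Set.right_mem_Icc.mpr h1)
  -- unfold: F 1 ≤ F h * h^(-(1/θ))
  have hG1 : G 1 = F 1 := by simp [hG, hp]
  have hFh : F 1 ≤ (h * φ h) * h ^ (-(1/θ)) := by
    have : F 1 ≤ F h * h ^ (-(1/θ)) := by rw [← hG1]; exact hGle
    refine this.trans ?_
    exact mul_le_mul_of_nonneg_right (hFle h ⟨h0, h1⟩) (Real.rpow_nonneg h0.le _)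
  -- finish
  have hfin : h ^ (1/θ - 1) * ((h * φ h) * h ^ (-(1/θ))) = φ h := by
    have e1 : h ^ (1/θ - 1) * ((h * φ h) * h ^ (-(1/θ)))
        = (h ^ (1/θ - 1) * h ^ (1:ℝ) * h ^ (-(1/θ))) * φ h := by
      rw [Real.rpow_one]; ring
    rw [e1, ← Real.rpow_add h0, ← Real.rpow_add h0]
    norm_num
  calc h ^ (1/θ - 1) * (∫ t in (0:ℝ)..1, φ t)
      ≤ h ^ (1/θ - 1) * ((h * φ h) * h ^ (-(1/θ))) :=
        mul_le_mul_of_nonneg_left hFh (Real.rpow_nonneg h0.le _)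
    _ = φ h := hfin
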